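/- Let α_1, α_2, α_3 be the three distinct complex roots of T^3 - T - 2. For every positive integer n, the three numbers α_1^n + 1, α_2^n + 1, α_3^n + 1 are pairwise distinct. -/

import Mathlib

/-- Coefficients of `T^n mod (T^3 - T - 2)`. -/
def P3 : ℕ → ℤ × ℤ × ℤ
  | 0 => (1, 0, 0)
  | n+1 => ((P3 n).2.2 * 2, (P3 n).1 + (P3 n).2.2, (P3 n).2.1)

lemma repr3 (x : ℂ) (hx : x ^ 3 = x + 2) :
    ∀ n : ℕ, x ^ n = ((P3 n).1 : ℂ) + ((P3 n).2.1 : ℂ) * x + ((P3 n).2.2 : ℂ) * x ^ 2 := by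
  intro n
  induction n with
  | zero => simp [P3]
  | succ k ih =>
      simp only [P3]
      push_cast
      rw [pow_succ, ih]
      linear_combination ((P3 k).2.2 : ℂ) * hx

lemma zmod5_nosol : ∀ a b : ZMod 5, a ^ 3 = a * b ^ 2 + 2 * b ^ 3 → a = 0 ∧ b = 0 := by decide

lemma int_nosol_aux (N : ℕ) : ∀ s q : ℤ, s.natAbs ≤ N → q ^ 3 = q * s ^ 2 + 2 * s ^ 3 → s = 0 := by
  induction N with
  | zero => intro s q h _; omega
  | succ N ih =>
      intro s q hle heq
      have h5 : ((q : ZMod 5)) ^ 3 = (q : ZMod 5) * (s : ZMod 5) ^ 2 + 2 * (s : ZMod 5) ^ 3 := by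
        have := congrArg (Int.cast : ℤ → ZMod 5) heq
        push_cast at this
        exact this
      obtain ⟨hq0, hs0⟩ := zmod5_nosol _ _ h5
      have hq5 : (5 : ℤ) ∣ q := (ZMod.intCast_zmod_eq_zero_iff_dvd q 5).mp hq0
      have hs5 : (5 : ℤ) ∣ s := (ZMod.intCast_zmod_eq_zero_iff_dvd s 5).mp hs0
      obtain ⟨q', rfl⟩ := hq5
      obtain ⟨s', rfl⟩ := hs5
      have heq' : q' ^ 3 = q' * s' ^ 2 + 2 * s' ^ 3 := by nlinarith [heq]
      rcases eq_or_ne s' 0 with h | h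
      · simp [h]
      · have habs : (5 * s').natAbs = 5 * s'.natAbs := by
          simp [Int.natAbs_mul]
        have : s'.natAbs ≤ N := by
          have hpos : 1 ≤ s'.natAbs := Int.natAbs_pos.mpr h
          omega
        have := ih s' q' this heq'
        simp [this]

lemma int_nosol (s q : ℤ) (heq : q ^ 3 = q * s ^ 2 + 2 * s ^ 3) : s = 0 :=
  int_nosol_aux s.natAbs s q le_rfl heq

lemma key (n : ℕ) (hn : n ≠ 0) (x y : ℂ) (hx : x ^ 3 = x + 2) (hy : y ^ 3 = y + 2)
    (hxy : x ≠ y) : x ^ n ≠ y ^ n := by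
  intro h
  set z : ℂ := -(x + y) with hz
  -- basic identities
  have hx0 : x ≠ 0 := by rintro rfl; norm_num at hx
  have hy0 : y ≠ 0 := by rintro rfl; norm_num at hy
  have hsum : x ^ 2 + x * y + y ^ 2 = 1 := by
    have hfac : (x - y) * (x ^ 2 + x * y + y ^ 2 - 1) = 0 := by linear_combination hx - hy
    have := sub_ne_zero_of_ne hxy
    have h2 := (mul_eq_zero.mp hfac).resolve_left this
    linear_combination h2
  have hprod : x * y * (x + y) = -2 := by
    linear_combination x * hsum - hx
  have hz0 : z ≠ 0 := by
    intro h0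
    rw [hz, neg_eq_zero] at h0
    -- x + y = 0 contradicts hprod
    rw [h0] at hprod
    norm_num at hprod
  have hz3 : z ^ 3 = z + 2 := by
    rw [hz]; linear_combination -hx - hy - 3 * hprod
  have hxyz : x * y * z = 2 := by
    rw [hz]; linear_combination -hprod
  -- representation
  have hrx := repr3 x hx n
  have hry := repr3 y hy n
  have hrz := repr3 z hz3 n
  set p : ℤ := (P3 n).1 with hp
  set q : ℤ := (P3 n).2.1 with hqd
  set s : ℤ := (P3 n).2.2 with hsd
  have hfac : (x - y) * ((q : ℂ) + (s : ℂ) * (x + y)) = 0 := by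
    linear_combination h - hrx + hry
  have hqs : (q : ℂ) + (s : ℂ) * (x + y) = 0 :=
    (mul_eq_zero.mp hfac).resolve_left (sub_ne_zero_of_ne hxy)
  by_cases hs : s = 0
  · -- q = 0, so x^n = y^n = z^n = p
    have hq : (q : ℂ) = 0 := by
      rw [hs] at hqs; push_cast at hqs; linear_combination hqs
    have hqz : q = 0 := by exact_mod_cast hq
    have hxp : x ^ n = (p : ℂ) := by rw [hrx, hq, hs]; push_cast; ring
    have hyp : y ^ n = (p : ℂ) := by rw [hry, hq, hs]; push_cast; ring
    have hzp : z ^ n = (p : ℂ) := by rw [hrz, hq, hs]; push_cast; ring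
    -- equal moduli
    have habs : ∀ u v : ℂ, u ^ n = v ^ n → ‖u‖ = ‖v‖ := by
      intro u v huv
      have : ‖u‖ ^ n = ‖v‖ ^ n := by
        rw [← norm_pow, ← norm_pow, huv]
      exact (pow_left_strictMonoOn₀ hn).injOn (norm_nonneg u) (norm_nonneg v) this
    have haxy : ‖x‖ = ‖y‖ := habs x y (by rw [hxp, hyp])
    have haxz : ‖x‖ = ‖z‖ := habs x z (by rw [hxp, hzp])
    -- normSq equalities
    have hnxy : (Complex.normSq x : ℂ) = Complex.normSq y := by
      rw [← Complex.sq_norm, ← Complex.sq_norm, haxy]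
    have hnxz : (Complex.normSq x : ℂ) = Complex.normSq z := by
      rw [← Complex.sq_norm, ← Complex.sq_norm, haxz]
    set c2 : ℂ := (Complex.normSq x : ℂ) with hc2
    have hcx : x * (starRingEnd ℂ) x = c2 := Complex.mul_conj x
    have hcy : y * (starRingEnd ℂ) y = c2 := by rw [Complex.mul_conj, ← hnxy]
    have hcz : z * (starRingEnd ℂ) z = c2 := by rw [Complex.mul_conj, ← hnxz]
    have e1 : 2 * (starRingEnd ℂ) x = c2 * (y * z) := by
      apply mul_left_cancel₀ hx0
      calc x * (2 * (starRingEnd ℂ) x) = 2 * (x * (starRingEnd ℂ) x) := by ring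
        _ = 2 * c2 := by rw [hcx]
        _ = c2 * (x * y * z) := by rw [hxyz]; ring
        _ = x * (c2 * (y * z)) := by ring
    have e2 : 2 * (starRingEnd ℂ) y = c2 * (x * z) := by
      apply mul_left_cancel₀ hy0
      calc y * (2 * (starRingEnd ℂ) y) = 2 * (y * (starRingEnd ℂ) y) := by ring
        _ = 2 * c2 := by rw [hcy]
        _ = c2 * (x * y * z) := by rw [hxyz]; ring
        _ = y * (c2 * (x * z)) := by ring
    have e3 : 2 * (starRingEnd ℂ) z = c2 * (x * y) := by
      apply mul_left_cancel₀ hz0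
      calc z * (2 * (starRingEnd ℂ) z) = 2 * (z * (starRingEnd ℂ) z) := by ring
        _ = 2 * c2 := by rw [hcz]
        _ = c2 * (x * y * z) := by rw [hxyz]; ring
        _ = z * (c2 * (x * y)) := by ring
    have hsum0 : x + y + z = 0 := by rw [hz]; ring
    have hconj0 : (starRingEnd ℂ) x + (starRingEnd ℂ) y + (starRingEnd ℂ) z = 0 := by
      rw [← map_add, ← map_add, hsum0, map_zero]
    have he2 : x * y + y * z + z * x = -1 := by
      rw [hz]; linear_combination -hsum
    have : c2 * (-1) = 0 := by
      calc c2 * (-1) = c2 * (x * y + y * z + z * x) := by rw [he2]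
        _ = 2 * ((starRingEnd ℂ) x + (starRingEnd ℂ) y + (starRingEnd ℂ) z) := by
            linear_combination -e1 - e2 - e3
        _ = 0 := by rw [hconj0]; ring
    have hc20 : c2 = 0 := by
      simpa using this
    have : Complex.normSq x = 0 := by
      rw [hc2] at hc20; exact_mod_cast hc20
    exact hx0 (Complex.normSq_eq_zero.mp this)
  · -- s ≠ 0 : rational root contradiction
    have hsz : (s : ℂ) * z = (q : ℂ) := by rw [hz]; linear_combination -hqs
    have hqc : (q : ℂ) ^ 3 = (q : ℂ) * (s : ℂ) ^ 2 + 2 * (s : ℂ) ^ 3 := by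
      calc (q : ℂ) ^ 3 = ((s : ℂ) * z) ^ 3 := by rw [hsz]
        _ = (s : ℂ) ^ 3 * z ^ 3 := by ring
        _ = (s : ℂ) ^ 3 * (z + 2) := by rw [hz3]
        _ = ((s : ℂ) * z) * (s : ℂ) ^ 2 + 2 * (s : ℂ) ^ 3 := by ring
        _ = (q : ℂ) * (s : ℂ) ^ 2 + 2 * (s : ℂ) ^ 3 := by rw [hsz]
    have hqi : q ^ 3 = q * s ^ 2 + 2 * s ^ 3 := by exact_mod_cast hqc
    exact hs (int_nosol s q hqi)

/-- Let `α₁, α₂, α₃` be the three distinct complex roots of `T³ - T - 2`. For every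
positive integer `n`, the numbers `α₁ⁿ + 1`, `α₂ⁿ + 1`, `α₃ⁿ + 1` are pairwise distinct. -/
theorem stmt_7 (α₁ α₂ α₃ : ℂ)
    (h₁ : α₁ ^ 3 - α₁ - 2 = 0) (h₂ : α₂ ^ 3 - α₂ - 2 = 0) (h₃ : α₃ ^ 3 - α₃ - 2 = 0)
    (h12 : α₁ ≠ α₂) (h13 : α₁ ≠ α₃) (h23 : α₂ ≠ α₃)
    (n : ℕ) (hn : 0 < n) :
    α₁ ^ n + 1 ≠ α₂ ^ n + 1 ∧ α₁ ^ n + 1 ≠ α₃ ^ n + 1 ∧ α₂ ^ n + 1 ≠ α₃ ^ n + 1 := by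
  have g₁ : α₁ ^ 3 = α₁ + 2 := by linear_combination h₁
  have g₂ : α₂ ^ 3 = α₂ + 2 := by linear_combination h₂
  have g₃ : α₃ ^ 3 = α₃ + 2 := by linear_combination h₃
  refine ⟨fun h => ?_, fun h => ?_, fun h => ?_⟩
  · exact key n hn.ne' α₁ α₂ g₁ g₂ h12 (add_right_cancel h)
  · exact key n hn.ne' α₁ α₃ g₁ g₃ h13 (add_right_cancel h)
  · exact key n hn.ne' α₂ α₃ g₂ g₃ h23 (add_right_cancel h)
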